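/- Let n ≥ 1, σ > 0 a real number, and l, r̃ ∈ ℝ with l + 1/2 > 0. Then there exist c > 0 and δ > 0 such that for all τ ∈ ℝ and μ ∈ ℝ^{n−1} satisfying τ² + |μ|² = 2στ and 0 < τ² + |μ|² < δ, one has 4σ( (l+r̃)τ² + (l+1/2)|μ|² ) − 4(l+r̃)τ(τ²+|μ|²) ≥ c·(τ²+|μ|²). If instead l + 1/2 < 0, there exist c, δ > 0 such that under the same constraints the left-hand side is ≤ −c·(τ²+|μ|²). -/
import Mathlib

lemma commutator_key (σ s a τ m : ℝ) (hσ : 0 < σ) (hchar : τ ^ 2 + m = 2 * σ * τ)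
    (hpos : 0 < τ ^ 2 + m) (hδ : τ ^ 2 + m < 2 * σ ^ 2 * |s| / (|a + s| + 1)) :
    4 * σ * (a * τ ^ 2 + s * m) - 4 * a * τ * (τ ^ 2 + m) - 2 * σ * s * (τ ^ 2 + m)
      = 4 * σ * τ * (σ * s - (a + s) * τ) ∧ 0 < τ ∧ |a + s| * τ ≤ σ * |s| := by
  have hτ : 0 < τ := by nlinarith
  have hm : m = 2 * σ * τ - τ ^ 2 := by linarith
  refine ⟨by rw [hm]; ring, hτ, ?_⟩
  have h1 : 0 < |a + s| + 1 := by positivity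
  have h2 : 2 * σ * τ < 2 * σ ^ 2 * |s| / (|a + s| + 1) := by linarith [hchar ▸ hδ]
  have h3 : 2 * σ * τ * (|a + s| + 1) < 2 * σ ^ 2 * |s| := by
    rw [← lt_div_iff₀ h1]; exact h2
  have h4 : |a + s| * τ * (2 * σ) ≤ τ * (|a + s| + 1) * (2 * σ) := by
    nlinarith [abs_nonneg (a + s)]
  nlinarith [abs_nonneg s, abs_nonneg (a + s)]

/-- Corollary 4.3 of the paper (ellipticity of the commutator symbol on the characteristic
set near the scattering zero section): for real `σ > 0`, in the rescaled fiber variables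
`(τ, μ)` with `τ² + |μ|² = 2στ`, the factor
`4σ((l+r̃)τ² + (l+1/2)|μ|²) − 4(l+r̃)τ(τ²+|μ|²)` is bounded below by `c(τ²+|μ|²)` near the
zero section if `l + 1/2 > 0`, and bounded above by `−c(τ²+|μ|²)` if `l + 1/2 < 0`. -/
theorem commutator_elliptic_on_char_set (n : ℕ) (hn : 1 ≤ n) (σ : ℝ) (hσ : 0 < σ)
    (l r : ℝ) :
    (l + 1 / 2 > 0 →
      ∃ c > (0 : ℝ), ∃ δ > (0 : ℝ), ∀ (τ : ℝ) (μ : EuclideanSpace ℝ (Fin (n - 1))),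
        τ ^ 2 + ‖μ‖ ^ 2 = 2 * σ * τ →
        0 < τ ^ 2 + ‖μ‖ ^ 2 → τ ^ 2 + ‖μ‖ ^ 2 < δ →
        4 * σ * ((l + r) * τ ^ 2 + (l + 1 / 2) * ‖μ‖ ^ 2)
            - 4 * (l + r) * τ * (τ ^ 2 + ‖μ‖ ^ 2)
          ≥ c * (τ ^ 2 + ‖μ‖ ^ 2)) ∧
    (l + 1 / 2 < 0 →
      ∃ c > (0 : ℝ), ∃ δ > (0 : ℝ), ∀ (τ : ℝ) (μ : EuclideanSpace ℝ (Fin (n - 1))),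
        τ ^ 2 + ‖μ‖ ^ 2 = 2 * σ * τ →
        0 < τ ^ 2 + ‖μ‖ ^ 2 → τ ^ 2 + ‖μ‖ ^ 2 < δ →
        4 * σ * ((l + r) * τ ^ 2 + (l + 1 / 2) * ‖μ‖ ^ 2)
            - 4 * (l + r) * τ * (τ ^ 2 + ‖μ‖ ^ 2)
          ≤ -c * (τ ^ 2 + ‖μ‖ ^ 2)) := by
  set s := l + 1 / 2 with hs
  set a := l + r with ha
  constructor
  · intro hspos
    refine ⟨2 * σ * s, by positivity, 2 * σ ^ 2 * |s| / (|a + s| + 1), by positivity,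
      fun τ μ hchar hpos hδ => ?_⟩
    obtain ⟨heq, hτ, hbd⟩ := commutator_key σ s a τ (‖μ‖ ^ 2) hσ hchar hpos hδ
    have habs : |s| = s := abs_of_pos hspos
    rw [habs] at hbd
    have hle : (a + s) * τ ≤ σ * s := (le_abs_self ((a+s)*τ)).trans (by
      rw [abs_mul, abs_of_pos hτ]; exact hbd)
    nlinarith
  · intro hsneg
    have h0 : 0 < |s| := abs_pos.mpr hsneg.ne
    refine ⟨2 * σ * (-s), by nlinarith, 2 * σ ^ 2 * |s| / (|a + s| + 1), by positivity,
      fun τ μ hchar hpos hδ => ?_⟩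
    obtain ⟨heq, hτ, hbd⟩ := commutator_key σ s a τ (‖μ‖ ^ 2) hσ hchar hpos hδ
    have habs : |s| = -s := abs_of_neg hsneg
    rw [habs] at hbd
    have hle : -((a + s) * τ) ≤ σ * (-s) := (neg_le_abs ((a+s)*τ)).trans (by
      rw [abs_mul, abs_of_pos hτ]; exact hbd)
    nlinarith
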